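/- In the inapproximability-reduction instance I' built from a bipartite graph G with |U|=|W|=n (n even), if G has a maximal matching of size k ≥ n/2, then I' has a weakly popular matching of size at least (5/2)n − k. -/

import Mathlib

open Finset
open scoped Classical
noncomputable section

/-- A bipartite preference instance: bipartite (multi)graph `G=(U,W;E)` where each
edge `e` has endpoints `src e ∈ U`, `dst e ∈ W`, and every vertex has a preference
valuation over edges (only values on incident edges are relevant); the valuation of
being unmatched (`∅`) is `0`. -/
structure PrefInst (U W E : Type) where
  src : E → U
  dst : E → W
  pU : U → E → ℝ
  pW : W → E → ℝ

namespace PrefInst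

variable {U W E : Type} [DecidableEq U] [DecidableEq W] [DecidableEq E]

/-- `M` is a matching: no two distinct edges of `M` share an endpoint. -/
def IsMatching (I : PrefInst U W E) (M : Finset E) : Prop :=
  ∀ e ∈ M, ∀ f ∈ M, e ≠ f → I.src e ≠ I.src f ∧ I.dst e ≠ I.dst f

/-- The edge of `M` incident to `u ∈ U` (if any): `M(u)`. -/
def mU (I : PrefInst U W E) (M : Finset E) (u : U) : Option E :=
  (M.filter fun e => I.src e = u).toList.head?

/-- The edge of `M` incident to `w ∈ W` (if any): `M(w)`. -/
def mW (I : PrefInst U W E) (M : Finset E) (w : W) : Option E :=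
  (M.filter fun e => I.dst e = w).toList.head?

/-- Valuation by `u` of a possible partner edge, with `p_u(∅) = 0`. -/
def valU (I : PrefInst U W E) (u : U) : Option E → ℝ
  | none => 0
  | some e => I.pU u e

def valW (I : PrefInst U W E) (w : W) : Option E → ℝ
  | none => 0
  | some e => I.pW w e

/-- `M` is maximal: no edge can be added keeping it a matching. -/
def Maximal (I : PrefInst U W E) (M : Finset E) : Prop :=
  ∀ e ∉ M, ¬ I.IsMatching (insert e M)

/-- Edge `e ∉ M` blocks `M` in the weak-stability sense: both endpoints strictly improve. -/
def Blocks (I : PrefInst U W E) (M : Finset E) (e : E) : Prop :=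
  e ∉ M ∧ I.valU (I.src e) (I.mU M (I.src e)) < I.pU (I.src e) e ∧
    I.valW (I.dst e) (I.mW M (I.dst e)) < I.pW (I.dst e) e

/-- Weak stability: no blocking edge. -/
def WeaklyStable (I : PrefInst U W E) (M : Finset E) : Prop :=
  ∀ e, ¬ I.Blocks M e

/-- Edge `e ∉ M` γ-min blocks `M`: both endpoints improve by at least their γ-threshold. -/
def GBlocks (I : PrefInst U W E) (γU γW : E → ℝ) (M : Finset E) (e : E) : Prop :=
  e ∉ M ∧ I.valU (I.src e) (I.mU M (I.src e)) + γU e ≤ I.pU (I.src e) e ∧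
    I.valW (I.dst e) (I.mW M (I.dst e)) + γW e ≤ I.pW (I.dst e) e

/-- γ-min stability: no γ-min blocking edge. -/
def GMinStable (I : PrefInst U W E) (γU γW : E → ℝ) (M : Finset E) : Prop :=
  ∀ e, ¬ I.GBlocks γU γW M e

/-- Standard vote of `u` comparing `M` to `N`: `+1` if strictly better in `M`,
`-1` if strictly better in `N`, `0` on equal value. -/
def sVoteU (I : PrefInst U W E) (M N : Finset E) (u : U) : ℤ :=
  if I.valU u (I.mU M u) = I.valU u (I.mU N u) then 0
  else if I.valU u (I.mU M u) < I.valU u (I.mU N u) then -1 else 1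

def sVoteW (I : PrefInst U W E) (M N : Finset E) (w : W) : ℤ :=
  if I.valW w (I.mW M w) = I.valW w (I.mW N w) then 0
  else if I.valW w (I.mW M w) < I.valW w (I.mW N w) then -1 else 1

/-- Weak vote of `u`: `0` if same partner, `-1` on strict improvement in `N`,
`+1` otherwise (partner changed without strict improvement). -/
def wVoteU (I : PrefInst U W E) (M N : Finset E) (u : U) : ℤ :=
  if I.mU M u = I.mU N u then 0
  else if I.valU u (I.mU M u) < I.valU u (I.mU N u) then -1 else 1

def wVoteW (I : PrefInst U W E) (M N : Finset E) (w : W) : ℤ :=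
  if I.mW M w = I.mW N w then 0
  else if I.valW w (I.mW M w) < I.valW w (I.mW N w) then -1 else 1

/-- Super vote of `u`: `0` if same partner, `-1` if the new partner is weakly
preferred (and different), `+1` only on strict worsening. -/
def supVoteU (I : PrefInst U W E) (M N : Finset E) (u : U) : ℤ :=
  if I.mU M u = I.mU N u then 0
  else if I.valU u (I.mU M u) ≤ I.valU u (I.mU N u) then -1 else 1

def supVoteW (I : PrefInst U W E) (M N : Finset E) (w : W) : ℤ :=
  if I.mW M w = I.mW N w then 0
  else if I.valW w (I.mW M w) ≤ I.valW w (I.mW N w) then -1 else 1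

/-- γ-vote of `u`: `0` if same partner; `-1` if `p_u(N(u)) ≥ p_u(M(u)) + γ_{N(u)}^u`;
`+1` otherwise (partner changed without a γ-sized improvement). -/
def gVoteU (I : PrefInst U W E) (γU : E → ℝ) (M N : Finset E) (u : U) : ℤ :=
  if I.mU M u = I.mU N u then 0
  else match I.mU N u with
    | none => 1
    | some e => if I.valU u (I.mU M u) + γU e ≤ I.pU u e then -1 else 1

def gVoteW (I : PrefInst U W E) (γW : E → ℝ) (M N : Finset E) (w : W) : ℤ :=
  if I.mW M w = I.mW N w then 0
  else match I.mW N w with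
    | none => 1
    | some e => if I.valW w (I.mW M w) + γW e ≤ I.pW w e then -1 else 1

variable [Fintype U] [Fintype W]

/-- Popularity (standard votes): `M` never loses a head-to-head comparison. -/
def Popular (I : PrefInst U W E) (M : Finset E) : Prop :=
  ∀ N, I.IsMatching N → 0 ≤ (∑ u, I.sVoteU M N u) + ∑ w, I.sVoteW M N w

/-- Weak popularity. -/
def WeaklyPopular (I : PrefInst U W E) (M : Finset E) : Prop :=
  ∀ N, I.IsMatching N → 0 ≤ (∑ u, I.wVoteU M N u) + ∑ w, I.wVoteW M N w

/-- Super popularity. -/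
def SuperPopular (I : PrefInst U W E) (M : Finset E) : Prop :=
  ∀ N, I.IsMatching N → 0 ≤ (∑ u, I.supVoteU M N u) + ∑ w, I.supVoteW M N w

/-- γ-popularity. -/
def GammaPopular (I : PrefInst U W E) (γU γW : E → ℝ) (M : Finset E) : Prop :=
  ∀ N, I.IsMatching N → 0 ≤ (∑ u, I.gVoteU γU M N u) + ∑ w, I.gVoteW γW M N w

end PrefInst
end

namespace PrefInst

/-- `K` is a maximal matching of the bipartite graph `G ⊆ U × W` (given as a
finite set of pairs): it is a matching contained in `G` to which no pair of `G`
can be added. -/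
def IsMaximalMatchingOf {α β : Type} [DecidableEq α] [DecidableEq β]
    (G K : Finset (α × β)) : Prop :=
  K ⊆ G ∧ (∀ p ∈ K, ∀ q ∈ K, p ≠ q → p.1 ≠ q.1 ∧ p.2 ≠ q.2) ∧
    ∀ p ∈ G, ∃ q ∈ K, q.1 = p.1 ∨ q.2 = p.2

/-- The inapproximability-reduction instance `I'` built from a bipartite graph
`G` on `U = W = Fin n`, `n = 2m` even.  U-side agents: `u_i` (`inl i`), `w_i'`
(`inr (inl i)`), `z_j` (`inr (inr j)`); W-side agents: `w_i` (`inl i`), `u_j'`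
(`inr (inl j)`), `z_j'` (`inr (inr j)`).  Edges: `inl ⟨(i,j),_⟩` the edges of
`G`; `inr (inl i) = (w_i,w_i')`; `inr (inr (inl (i,j))) = (u_i,u_j')`;
`inr (inr (inr (inl j))) = (u_j',z_j)`; `inr (inr (inr (inr j))) = (z_j,z_j')`.
Preferences: `u_i: [V_G(u_i)] ≻ [U']`; `w_i: [V_G(w_i)] ≻ w_i'`; `w_i': w_i`;
`u_j': z_j ≻ [U]`; `z_j: u_j' ≻ z_j'`; `z_j': z_j` (brackets are ties). -/
noncomputable def inapx (m : ℕ) (G : Finset (Fin (2 * m) × Fin (2 * m))) :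
    PrefInst (Fin (2 * m) ⊕ Fin (2 * m) ⊕ Fin m) (Fin (2 * m) ⊕ Fin m ⊕ Fin m)
      ({p : Fin (2 * m) × Fin (2 * m) // p ∈ G} ⊕ Fin (2 * m) ⊕
        (Fin (2 * m) × Fin m) ⊕ Fin m ⊕ Fin m) where
  src := fun d =>
    match d with
    | Sum.inl p => Sum.inl p.1.1
    | Sum.inr (Sum.inl i) => Sum.inr (Sum.inl i)
    | Sum.inr (Sum.inr (Sum.inl (i, _))) => Sum.inl i
    | Sum.inr (Sum.inr (Sum.inr (Sum.inl j))) => Sum.inr (Sum.inr j)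
    | Sum.inr (Sum.inr (Sum.inr (Sum.inr j))) => Sum.inr (Sum.inr j)
  dst := fun d =>
    match d with
    | Sum.inl p => Sum.inl p.1.2
    | Sum.inr (Sum.inl i) => Sum.inl i
    | Sum.inr (Sum.inr (Sum.inl (_, j))) => Sum.inr (Sum.inl j)
    | Sum.inr (Sum.inr (Sum.inr (Sum.inl j))) => Sum.inr (Sum.inl j)
    | Sum.inr (Sum.inr (Sum.inr (Sum.inr j))) => Sum.inr (Sum.inr j)
  pU := fun v d =>
    match v, d with
    | Sum.inl i, Sum.inl p => if p.1.1 = i then 2 else 0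
    | Sum.inl i, Sum.inr (Sum.inr (Sum.inl (a, _))) => if a = i then 1 else 0
    | Sum.inl _, _ => 0
    | Sum.inr (Sum.inl i), Sum.inr (Sum.inl a) => if a = i then 1 else 0
    | Sum.inr (Sum.inl _), _ => 0
    | Sum.inr (Sum.inr j), Sum.inr (Sum.inr (Sum.inr (Sum.inl a))) =>
        if a = j then 2 else 0
    | Sum.inr (Sum.inr j), Sum.inr (Sum.inr (Sum.inr (Sum.inr a))) =>
        if a = j then 1 else 0
    | Sum.inr (Sum.inr _), _ => 0
  pW := fun v d =>
    match v, d with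
    | Sum.inl i, Sum.inl p => if p.1.2 = i then 2 else 0
    | Sum.inl i, Sum.inr (Sum.inl a) => if a = i then 1 else 0
    | Sum.inl _, _ => 0
    | Sum.inr (Sum.inl j), Sum.inr (Sum.inr (Sum.inr (Sum.inl a))) =>
        if a = j then 2 else 0
    | Sum.inr (Sum.inl j), Sum.inr (Sum.inr (Sum.inl (_, b))) =>
        if b = j then 1 else 0
    | Sum.inr (Sum.inl _), _ => 0
    | Sum.inr (Sum.inr j), Sum.inr (Sum.inr (Sum.inr (Sum.inr a))) =>
        if a = j then 1 else 0
    | Sum.inr (Sum.inr _), _ => 0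

end PrefInst

namespace PrefInst

section Helpers

variable {U W E : Type} [DecidableEq U] [DecidableEq W] [DecidableEq E]

set_option linter.unusedSectionVars false

lemma mU_eq_none' (I : PrefInst U W E) {M : Finset E} {u : U}
    (h : ∀ e ∈ M, I.src e ≠ u) : I.mU M u = none := by
  have : M.filter (fun e => I.src e = u) = ∅ :=
    Finset.filter_false_of_mem (fun e he => h e he)
  simp [mU, this]

lemma mW_eq_none' (I : PrefInst U W E) {M : Finset E} {w : W}
    (h : ∀ e ∈ M, I.dst e ≠ w) : I.mW M w = none := by
  have : M.filter (fun e => I.dst e = w) = ∅ :=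
    Finset.filter_false_of_mem (fun e he => h e he)
  simp [mW, this]

lemma mU_eq_some' (I : PrefInst U W E) {M : Finset E} (hM : I.IsMatching M)
    {e : E} (he : e ∈ M) : I.mU M (I.src e) = some e := by
  have hf : M.filter (fun f => I.src f = I.src e) = {e} := by
    ext f
    simp only [Finset.mem_filter, Finset.mem_singleton]
    constructor
    · rintro ⟨hfM, hsf⟩
      by_contra hne
      exact (hM f hfM e he hne).1 hsf
    · rintro rfl; exact ⟨he, rfl⟩
  simp [mU, hf]

lemma mW_eq_some' (I : PrefInst U W E) {M : Finset E} (hM : I.IsMatching M)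
    {e : E} (he : e ∈ M) : I.mW M (I.dst e) = some e := by
  have hf : M.filter (fun f => I.dst f = I.dst e) = {e} := by
    ext f
    simp only [Finset.mem_filter, Finset.mem_singleton]
    constructor
    · rintro ⟨hfM, hsf⟩
      by_contra hne
      exact (hM f hfM e he hne).2 hsf
    · rintro rfl; exact ⟨he, rfl⟩
  simp [mW, hf]

lemma mU_mem' (I : PrefInst U W E) {M : Finset E} {u : U} {e : E}
    (h : I.mU M u = some e) : e ∈ M ∧ I.src e = u := by
  unfold mU at h
  rcases hl : (M.filter fun f => I.src f = u).toList with _ | ⟨a, t⟩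
  · rw [hl] at h; simp at h
  · rw [hl] at h
    simp only [List.head?] at h
    have ha : a ∈ (M.filter fun f => I.src f = u).toList := by
      rw [hl]; exact List.mem_cons_self
    rw [Finset.mem_toList, Finset.mem_filter] at ha
    cases h; exact ha

lemma mW_mem' (I : PrefInst U W E) {M : Finset E} {w : W} {e : E}
    (h : I.mW M w = some e) : e ∈ M ∧ I.dst e = w := by
  unfold mW at h
  rcases hl : (M.filter fun f => I.dst f = w).toList with _ | ⟨a, t⟩
  · rw [hl] at h; simp at h
  · rw [hl] at h
    simp only [List.head?] at h
    have ha : a ∈ (M.filter fun f => I.dst f = w).toList := by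
      rw [hl]; exact List.mem_cons_self
    rw [Finset.mem_toList, Finset.mem_filter] at ha
    cases h; exact ha

lemma valU_of (I : PrefInst U W E) {M : Finset E} {u : U} {e' : E}
    (h : I.mU M u = some e') : I.valU u (I.mU M u) = I.pU u e' := by
  rw [h]; rfl

lemma valW_of (I : PrefInst U W E) {M : Finset E} {w : W} {e' : E}
    (h : I.mW M w = some e') : I.valW w (I.mW M w) = I.pW w e' := by
  rw [h]; rfl

variable [Fintype U] [Fintype W]

/-- Witness certificate implies weak popularity. -/
lemma witness_weaklyPopular (I : PrefInst U W E) {M : Finset E}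
    (hM : I.IsMatching M) (αU : U → ℤ) (αW : W → ℤ)
    (hUub : ∀ u, αU u ≤ if I.mU M u = none then 0
      else if I.valU u (I.mU M u) < 0 then -1 else 1)
    (hWub : ∀ w, αW w ≤ if I.mW M w = none then 0
      else if I.valW w (I.mW M w) < 0 then -1 else 1)
    (hedge : ∀ e, αU (I.src e) + αW (I.dst e) ≤
      (if I.mU M (I.src e) = some e then 0
        else if I.valU (I.src e) (I.mU M (I.src e)) < I.pU (I.src e) e then -1 else 1) +
      (if I.mW M (I.dst e) = some e then 0
        else if I.valW (I.dst e) (I.mW M (I.dst e)) < I.pW (I.dst e) e then -1 else 1))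
    (hsum : 0 ≤ (∑ u, αU u) + ∑ w, αW w) :
    I.WeaklyPopular M := by
  intro N hN
  have hvoteU_none : ∀ u, I.mU N u = none → I.wVoteU M N u =
      (if I.mU M u = none then 0 else if I.valU u (I.mU M u) < 0 then -1 else 1) := by
    intro u hu
    unfold wVoteU
    rw [hu]
    rcases h : I.mU M u with _ | e
    · simp
    · simp [valU]
      exact if_congr Iff.rfl rfl rfl
  have hvoteU_some : ∀ e ∈ N, I.wVoteU M N (I.src e) =
      (if I.mU M (I.src e) = some e then 0
        else if I.valU (I.src e) (I.mU M (I.src e)) < I.pU (I.src e) e then -1 else 1) := by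
    intro e he
    unfold wVoteU
    rw [I.mU_eq_some' hN he]
    rfl
  have hvoteW_none : ∀ w, I.mW N w = none → I.wVoteW M N w =
      (if I.mW M w = none then 0 else if I.valW w (I.mW M w) < 0 then -1 else 1) := by
    intro w hw
    unfold wVoteW
    rw [hw]
    rcases h : I.mW M w with _ | e
    · simp
    · simp [valW]
      exact if_congr Iff.rfl rfl rfl
  have hvoteW_some : ∀ e ∈ N, I.wVoteW M N (I.dst e) =
      (if I.mW M (I.dst e) = some e then 0
        else if I.valW (I.dst e) (I.mW M (I.dst e)) < I.pW (I.dst e) e then -1 else 1) := by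
    intro e he
    unfold wVoteW
    rw [I.mW_eq_some' hN he]
    rfl
  set SU : Finset U := N.image I.src with hSU
  set SW : Finset W := N.image I.dst with hSW
  have hsplitU : ∑ u, I.wVoteU M N u = (∑ u ∈ SU, I.wVoteU M N u) + ∑ u ∈ SUᶜ, I.wVoteU M N u :=
    (Finset.sum_add_sum_compl SU _).symm
  have hsplitW : ∑ w, I.wVoteW M N w = (∑ w ∈ SW, I.wVoteW M N w) + ∑ w ∈ SWᶜ, I.wVoteW M N w :=
    (Finset.sum_add_sum_compl SW _).symm
  have hsplitaU : ∑ u, αU u = (∑ u ∈ SU, αU u) + ∑ u ∈ SUᶜ, αU u :=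
    (Finset.sum_add_sum_compl SU _).symm
  have hsplitaW : ∑ w, αW w = (∑ w ∈ SW, αW w) + ∑ w ∈ SWᶜ, αW w :=
    (Finset.sum_add_sum_compl SW _).symm
  have hcU : ∑ u ∈ SUᶜ, αU u ≤ ∑ u ∈ SUᶜ, I.wVoteU M N u := by
    apply Finset.sum_le_sum
    intro u hu
    have hnone : I.mU N u = none := by
      apply I.mU_eq_none'
      intro e he hse
      rw [Finset.mem_compl, hSU] at hu
      exact hu (Finset.mem_image.2 ⟨e, he, hse⟩)
    rw [hvoteU_none u hnone]
    exact hUub u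
  have hcW : ∑ w ∈ SWᶜ, αW w ≤ ∑ w ∈ SWᶜ, I.wVoteW M N w := by
    apply Finset.sum_le_sum
    intro w hw
    have hnone : I.mW N w = none := by
      apply I.mW_eq_none'
      intro e he hse
      rw [Finset.mem_compl, hSW] at hw
      exact hw (Finset.mem_image.2 ⟨e, he, hse⟩)
    rw [hvoteW_none w hnone]
    exact hWub w
  have hinjU : ∀ e ∈ N, ∀ f ∈ N, I.src e = I.src f → e = f := by
    intro e he f hf hef
    by_contra hne
    exact (hN e he f hf hne).1 hef
  have hinjW : ∀ e ∈ N, ∀ f ∈ N, I.dst e = I.dst f → e = f := by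
    intro e he f hf hef
    by_contra hne
    exact (hN e he f hf hne).2 hef
  have himgU : ∀ g : U → ℤ, ∑ u ∈ SU, g u = ∑ e ∈ N, g (I.src e) := by
    intro g
    rw [hSU, Finset.sum_image hinjU]
  have himgW : ∀ g : W → ℤ, ∑ w ∈ SW, g w = ∑ e ∈ N, g (I.dst e) := by
    intro g
    rw [hSW, Finset.sum_image hinjW]
  have hmain : (∑ u ∈ SU, αU u) + ∑ w ∈ SW, αW w ≤
      (∑ u ∈ SU, I.wVoteU M N u) + ∑ w ∈ SW, I.wVoteW M N w := by
    rw [himgU, himgW, himgU, himgW, ← Finset.sum_add_distrib, ← Finset.sum_add_distrib]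
    apply Finset.sum_le_sum
    intro e he
    rw [hvoteU_some e he, hvoteW_some e he]
    exact hedge e
  calc (0:ℤ) ≤ (∑ u, αU u) + ∑ w, αW w := hsum
    _ = ((∑ u ∈ SU, αU u) + ∑ w ∈ SW, αW w) + ((∑ u ∈ SUᶜ, αU u) + ∑ w ∈ SWᶜ, αW w) := by
        rw [hsplitaU, hsplitaW]; ring
    _ ≤ ((∑ u ∈ SU, I.wVoteU M N u) + ∑ w ∈ SW, I.wVoteW M N w) +
        ((∑ u ∈ SUᶜ, I.wVoteU M N u) + ∑ w ∈ SWᶜ, I.wVoteW M N w) := by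
        exact add_le_add hmain (add_le_add hcU hcW)
    _ = (∑ u, I.wVoteU M N u) + ∑ w, I.wVoteW M N w := by
        rw [hsplitU, hsplitW]; ring

end Helpers

end PrefInst

/-- helper for evaluating sums of indicators -/
lemma sum_ite_card' {α : Type} [Fintype α] [DecidableEq α] (s : Finset α) (a b : ℤ) :
    ∑ i, (if i ∈ s then a else b) = s.card * a + sᶜ.card * b := by
  classical
  rw [Finset.sum_ite, Finset.sum_const, Finset.sum_const]
  congr 2
  · rw [Finset.filter_mem_eq_inter, Finset.univ_inter]
  · congr 1
    ext x; simp
namespace PrefInst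

variable {m : ℕ} {G K : Finset (Fin (2*m) × Fin (2*m))}

/-- The matching for the reduction instance. -/
noncomputable def Mset (m : ℕ) (G K : Finset (Fin (2*m) × Fin (2*m))) (hKG : K ⊆ G)
    (A : Finset (Fin (2*m))) (Wc : Finset (Fin (2*m))) (f : {x // x ∈ A} ↪ Fin m) :
    Finset ({p : Fin (2 * m) × Fin (2 * m) // p ∈ G} ⊕ Fin (2 * m) ⊕
      (Fin (2 * m) × Fin m) ⊕ Fin m ⊕ Fin m) :=
  (K.attach.map ⟨fun p => Sum.inl ⟨p.1, hKG p.2⟩, id (by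
      intro a b hab
      simp only [Sum.inl.injEq, Subtype.mk.injEq] at hab
      exact Subtype.ext hab)⟩) ∪
  (Wcᶜ.map ⟨fun i => Sum.inr (Sum.inl i), id (by
      intro a b hab; simpa using hab)⟩) ∪
  (A.attach.map ⟨fun x => Sum.inr (Sum.inr (Sum.inl (x.1, f x))), id (by
      intro a b hab
      simp only [Sum.inr.injEq, Sum.inl.injEq, Prod.mk.injEq] at hab
      exact Subtype.ext hab.1)⟩) ∪
  ((A.attach.image f)ᶜ.map ⟨fun j => Sum.inr (Sum.inr (Sum.inr (Sum.inl j))), id (by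
      intro a b hab; simpa using hab)⟩) ∪
  ((A.attach.image f).map ⟨fun j => Sum.inr (Sum.inr (Sum.inr (Sum.inr j))), id (by
      intro a b hab; simpa using hab)⟩)

variable (hKG : K ⊆ G) (A : Finset (Fin (2*m))) (Wc : Finset (Fin (2*m))) (f : {x // x ∈ A} ↪ Fin m)

lemma mem_Mset_G (q : {p : Fin (2 * m) × Fin (2 * m) // p ∈ G}) :
    Sum.inl q ∈ Mset m G K hKG A Wc f ↔ q.1 ∈ K := by
  simp only [Mset, Finset.mem_union, Finset.mem_map, Function.Embedding.coeFn_mk]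
  constructor
  · rintro ((((⟨x, hx1, hx⟩ | ⟨x, hx1, hx⟩) | ⟨x, hx1, hx⟩) | ⟨x, hx1, hx⟩) | ⟨x, hx1, hx⟩)
    · simp only [Sum.inl.injEq, Subtype.mk.injEq] at hx
      exact hx ▸ x.2
    · simp at hx
    · simp at hx
    · simp at hx
    · simp at hx
  · intro hq
    exact Or.inl (Or.inl (Or.inl (Or.inl ⟨⟨q.1, hq⟩, Finset.mem_attach _ _, by simp⟩)))

lemma mem_Mset_w (i : Fin (2*m)) :
    (Sum.inr (Sum.inl i) : {p : Fin (2 * m) × Fin (2 * m) // p ∈ G} ⊕ Fin (2 * m) ⊕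
      (Fin (2 * m) × Fin m) ⊕ Fin m ⊕ Fin m) ∈ Mset m G K hKG A Wc f ↔ i ∉ Wc := by
  simp only [Mset, Finset.mem_union, Finset.mem_map, Function.Embedding.coeFn_mk]
  constructor
  · rintro ((((⟨x, hx1, hx⟩ | ⟨x, hx1, hx⟩) | ⟨x, hx1, hx⟩) | ⟨x, hx1, hx⟩) | ⟨x, hx1, hx⟩)
    · simp at hx
    · obtain rfl : x = i := by simpa using hx
      exact Finset.mem_compl.1 hx1
    · simp at hx
    · simp at hx
    · simp at hx
  · intro hi
    exact Or.inl (Or.inl (Or.inl (Or.inr ⟨i, Finset.mem_compl.2 hi, rfl⟩)))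

lemma mem_Mset_uu (i : Fin (2*m)) (j : Fin m) :
    (Sum.inr (Sum.inr (Sum.inl (i, j))) : {p : Fin (2 * m) × Fin (2 * m) // p ∈ G} ⊕ Fin (2 * m) ⊕
      (Fin (2 * m) × Fin m) ⊕ Fin m ⊕ Fin m) ∈ Mset m G K hKG A Wc f ↔
      ∃ h : i ∈ A, f ⟨i, h⟩ = j := by
  simp only [Mset, Finset.mem_union, Finset.mem_map, Function.Embedding.coeFn_mk]
  constructor
  · rintro ((((⟨x, hx1, hx⟩ | ⟨x, hx1, hx⟩) | ⟨x, hx1, hx⟩) | ⟨x, hx1, hx⟩) | ⟨x, hx1, hx⟩)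
    · simp at hx
    · simp at hx
    · simp only [Sum.inr.injEq, Sum.inl.injEq, Prod.mk.injEq] at hx
      refine ⟨hx.1 ▸ x.2, ?_⟩
      obtain ⟨a, ha⟩ := x
      cases hx.1
      exact hx.2
    · simp at hx
    · simp at hx
  · rintro ⟨h, hf⟩
    exact Or.inl (Or.inl (Or.inr ⟨⟨i, h⟩, Finset.mem_attach _ _, by rw [hf]⟩))

lemma mem_Mset_uz (j : Fin m) :
    (Sum.inr (Sum.inr (Sum.inr (Sum.inl j))) : {p : Fin (2 * m) × Fin (2 * m) // p ∈ G} ⊕ Fin (2 * m) ⊕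
      (Fin (2 * m) × Fin m) ⊕ Fin m ⊕ Fin m) ∈ Mset m G K hKG A Wc f ↔
      j ∉ A.attach.image f := by
  simp only [Mset, Finset.mem_union, Finset.mem_map, Function.Embedding.coeFn_mk]
  constructor
  · rintro ((((⟨x, hx1, hx⟩ | ⟨x, hx1, hx⟩) | ⟨x, hx1, hx⟩) | ⟨x, hx1, hx⟩) | ⟨x, hx1, hx⟩)
    · simp at hx
    · simp at hx
    · simp at hx
    · obtain rfl : x = j := by simpa using hx
      exact Finset.mem_compl.1 hx1
    · simp at hx
  · intro hj
    exact Or.inl (Or.inr ⟨j, Finset.mem_compl.2 hj, rfl⟩)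

lemma mem_Mset_zz (j : Fin m) :
    (Sum.inr (Sum.inr (Sum.inr (Sum.inr j))) : {p : Fin (2 * m) × Fin (2 * m) // p ∈ G} ⊕ Fin (2 * m) ⊕
      (Fin (2 * m) × Fin m) ⊕ Fin m ⊕ Fin m) ∈ Mset m G K hKG A Wc f ↔
      j ∈ A.attach.image f := by
  simp only [Mset, Finset.mem_union, Finset.mem_map, Function.Embedding.coeFn_mk]
  constructor
  · rintro ((((⟨x, hx1, hx⟩ | ⟨x, hx1, hx⟩) | ⟨x, hx1, hx⟩) | ⟨x, hx1, hx⟩) | ⟨x, hx1, hx⟩)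
    · simp at hx
    · simp at hx
    · simp at hx
    · simp at hx
    · obtain rfl : x = j := by simpa using hx
      exact hx1
  · intro hj
    exact Or.inr ⟨j, hj, rfl⟩

lemma card_Mset :
    (Mset m G K hKG A Wc f).card =
      K.card + Wcᶜ.card + A.card + (A.attach.image f)ᶜ.card + (A.attach.image f).card := by
  classical
  unfold Mset
  rw [Finset.card_union_of_disjoint (by
      rw [Finset.disjoint_right]
      rintro a hb ha
      obtain ⟨y, -, rfl⟩ := Finset.mem_map.1 hb
      simp only [Finset.mem_union, Finset.mem_map, Function.Embedding.coeFn_mk] at ha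
      rcases ha with ((⟨x, -, h⟩ | ⟨x, -, h⟩) | ⟨x, -, h⟩) | ⟨x, -, h⟩ <;> simp at h),
    Finset.card_union_of_disjoint (by
      rw [Finset.disjoint_right]
      rintro a hb ha
      obtain ⟨y, -, rfl⟩ := Finset.mem_map.1 hb
      simp only [Finset.mem_union, Finset.mem_map, Function.Embedding.coeFn_mk] at ha
      rcases ha with (⟨x, -, h⟩ | ⟨x, -, h⟩) | ⟨x, -, h⟩ <;> simp at h),
    Finset.card_union_of_disjoint (by
      rw [Finset.disjoint_right]
      rintro a hb ha
      obtain ⟨y, -, rfl⟩ := Finset.mem_map.1 hb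
      simp only [Finset.mem_union, Finset.mem_map, Function.Embedding.coeFn_mk] at ha
      rcases ha with ⟨x, -, h⟩ | ⟨x, -, h⟩ <;> simp at h),
    Finset.card_union_of_disjoint (by
      rw [Finset.disjoint_right]
      rintro a hb ha
      obtain ⟨y, -, rfl⟩ := Finset.mem_map.1 hb
      obtain ⟨x, -, h⟩ := Finset.mem_map.1 ha
      simp at h)]
  simp [Finset.card_attach]

end PrefInst
open PrefInst in
set_option maxHeartbeats 3200000 in
private theorem inapx_aux
    (m k : ℕ) (G : Finset (Fin (2 * m) × Fin (2 * m)))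
    (K : Finset (Fin (2 * m) × Fin (2 * m)))
    (hK : IsMaximalMatchingOf G K) (hKcard : K.card = k) (hk : m ≤ k) :
    ∃ M', (inapx m G).IsMatching M' ∧ (inapx m G).WeaklyPopular M' ∧
      5 * m - k ≤ M'.card := by
  classical
  obtain ⟨hKG, hKmatch, hKmax⟩ := hK
  set Ucov : Finset (Fin (2*m)) := K.image Prod.fst with hUcovdef
  set Wcov : Finset (Fin (2*m)) := K.image Prod.snd with hWcovdef
  set A : Finset (Fin (2*m)) := Ucovᶜ with hAdef
  have hfst : ∀ p ∈ K, ∀ q ∈ K, p.1 = q.1 → p = q := fun p hp q hq h => by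
    by_contra hne; exact (hKmatch p hp q hq hne).1 h
  have hsnd : ∀ p ∈ K, ∀ q ∈ K, p.2 = q.2 → p = q := fun p hp q hq h => by
    by_contra hne; exact (hKmatch p hp q hq hne).2 h
  have hUcovcard : Ucov.card = k := by
    rw [hUcovdef, ← hKcard]
    exact Finset.card_image_of_injOn fun p hp q hq h => hfst p hp q hq h
  have hWcovcard : Wcov.card = k := by
    rw [hWcovdef, ← hKcard]
    exact Finset.card_image_of_injOn fun p hp q hq h => hsnd p hp q hq h
  have hkn : k ≤ 2*m := by
    have h1 := Finset.card_le_univ Ucov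
    rw [hUcovcard] at h1
    simpa using h1
  have hAcard : A.card = 2*m - k := by
    rw [hAdef, Finset.card_compl, hUcovcard]; simp
  have hcardle : Fintype.card {x // x ∈ A} ≤ Fintype.card (Fin m) := by
    rw [Fintype.card_coe, Fintype.card_fin, hAcard]; omega
  obtain ⟨f⟩ := Function.Embedding.nonempty_of_card_le hcardle
  set B : Finset (Fin m) := A.attach.image f with hBdef
  have hBcard : B.card = 2*m - k := by
    rw [hBdef, Finset.card_image_of_injective _ f.injective, Finset.card_attach, hAcard]
  set M : Finset ({p : Fin (2 * m) × Fin (2 * m) // p ∈ G} ⊕ Fin (2 * m) ⊕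
      (Fin (2 * m) × Fin m) ⊕ Fin m ⊕ Fin m) := Mset m G K hKG A Wcov f with hMdef
  -- membership characterizations
  have hGmem : ∀ q : {p : Fin (2 * m) × Fin (2 * m) // p ∈ G}, Sum.inl q ∈ M ↔ q.1 ∈ K := by
    intro q; rw [hMdef]; exact mem_Mset_G hKG A Wcov f q
  have hwmem : ∀ i, (Sum.inr (Sum.inl i) : {p : Fin (2 * m) × Fin (2 * m) // p ∈ G} ⊕ Fin (2 * m) ⊕
      (Fin (2 * m) × Fin m) ⊕ Fin m ⊕ Fin m) ∈ M ↔ i ∉ Wcov := by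
    intro i; rw [hMdef]; exact mem_Mset_w hKG A Wcov f i
  have huumem : ∀ i j, (Sum.inr (Sum.inr (Sum.inl (i, j))) : {p : Fin (2 * m) × Fin (2 * m) // p ∈ G} ⊕ Fin (2 * m) ⊕
      (Fin (2 * m) × Fin m) ⊕ Fin m ⊕ Fin m) ∈ M ↔ ∃ h : i ∈ A, f ⟨i, h⟩ = j := by
    intro i j; rw [hMdef]; exact mem_Mset_uu hKG A Wcov f i j
  have huzmem : ∀ j, (Sum.inr (Sum.inr (Sum.inr (Sum.inl j))) : {p : Fin (2 * m) × Fin (2 * m) // p ∈ G} ⊕ Fin (2 * m) ⊕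
      (Fin (2 * m) × Fin m) ⊕ Fin m ⊕ Fin m) ∈ M ↔ j ∉ B := by
    intro j; rw [hMdef, mem_Mset_uz, ← hBdef]
  have hzzmem : ∀ j, (Sum.inr (Sum.inr (Sum.inr (Sum.inr j))) : {p : Fin (2 * m) × Fin (2 * m) // p ∈ G} ⊕ Fin (2 * m) ⊕
      (Fin (2 * m) × Fin m) ⊕ Fin m ⊕ Fin m) ∈ M ↔ j ∈ B := by
    intro j; rw [hMdef, mem_Mset_zz, ← hBdef]
  have hcovU : ∀ p ∈ K, p.1 ∈ Ucov := fun p hp => by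
    rw [hUcovdef]; exact Finset.mem_image.2 ⟨p, hp, rfl⟩
  have hcovW : ∀ p ∈ K, p.2 ∈ Wcov := fun p hp => by
    rw [hWcovdef]; exact Finset.mem_image.2 ⟨p, hp, rfl⟩
  -- the matching property
  have hmatch : (inapx m G).IsMatching M := by
    intro e he e2 he2 hne
    rcases e with q | i | ⟨i, j⟩ | j | j <;> rcases e2 with q' | i' | ⟨i', j'⟩ | j' | j'
    -- (G,G)
    ·
      have hq : q.1 ∈ K := (hGmem q).1 he
      have hq' : q'.1 ∈ K := (hGmem q').1 he2
      have hqq : q.1 ≠ q'.1 := fun h => hne (by rw [show q = q' from Subtype.ext h])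
      have h2 := hKmatch q.1 hq q'.1 hq' hqq
      exact ⟨by simp [inapx, h2.1], by simp [inapx, h2.2]⟩
    ·
      have hq := (hGmem q).1 he
      have hi' := (hwmem i').1 he2
      have hd : q.1.2 ≠ i' := fun h => hi' (h ▸ hcovW q.1 hq)
      exact ⟨by simp [inapx], by simp [inapx, hd]⟩
    ·
      have hq := (hGmem q).1 he
      obtain ⟨hiA, -⟩ := (huumem i' j').1 he2
      rw [hAdef] at hiA
      have hd : q.1.1 ≠ i' := fun h => (Finset.mem_compl.1 hiA) (h ▸ hcovU q.1 hq)
      exact ⟨by simp [inapx, hd], by simp [inapx]⟩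
    ·
      exact ⟨by simp [inapx], by simp [inapx]⟩
    ·
      exact ⟨by simp [inapx], by simp [inapx]⟩
    ·
      have hq := (hGmem q').1 he2
      have hi := (hwmem i).1 he
      have hd : i ≠ q'.1.2 := fun h => hi (h ▸ hcovW q'.1 hq)
      exact ⟨by simp [inapx], by simp [inapx, hd]⟩
    ·
      have hd : i ≠ i' := fun h => hne (by rw [h])
      exact ⟨by simp [inapx, hd], by simp [inapx, hd]⟩
    ·
      exact ⟨by simp [inapx], by simp [inapx]⟩
    ·
      exact ⟨by simp [inapx], by simp [inapx]⟩
    ·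
      exact ⟨by simp [inapx], by simp [inapx]⟩
    ·
      have hq := (hGmem q').1 he2
      obtain ⟨hiA, -⟩ := (huumem i j).1 he
      rw [hAdef] at hiA
      have hd : i ≠ q'.1.1 := fun h => (Finset.mem_compl.1 hiA) (h ▸ hcovU q'.1 hq)
      exact ⟨by simp [inapx, hd], by simp [inapx]⟩
    ·
      exact ⟨by simp [inapx], by simp [inapx]⟩
    ·
      obtain ⟨h1, hf1⟩ := (huumem i j).1 he
      obtain ⟨h2, hf2⟩ := (huumem i' j').1 he2
      have hii : i ≠ i' := by
        intro h
        apply hne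
        subst h
        have hjj : j = j' := by rw [← hf1, ← hf2]
        rw [hjj]
      have hjj : j ≠ j' := by
        intro h
        apply hii
        have h3 := f.injective (hf1.trans (h.trans hf2.symm))
        exact congrArg Subtype.val h3
      exact ⟨by simp [inapx, hii], by simp [inapx, hjj]⟩
    ·
      obtain ⟨h1, hf1⟩ := (huumem i j).1 he
      have hjB : j ∈ B := by
        rw [hBdef]; exact Finset.mem_image.2 ⟨⟨i, h1⟩, Finset.mem_attach _ _, hf1⟩
      have hj' := (huzmem j').1 he2
      have hd : j ≠ j' := fun h => hj' (h ▸ hjB)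
      exact ⟨by simp [inapx], by simp [inapx, hd]⟩
    ·
      exact ⟨by simp [inapx], by simp [inapx]⟩
    ·
      exact ⟨by simp [inapx], by simp [inapx]⟩
    ·
      exact ⟨by simp [inapx], by simp [inapx]⟩
    ·
      obtain ⟨h1, hf1⟩ := (huumem i' j').1 he2
      have hjB : j' ∈ B := by
        rw [hBdef]; exact Finset.mem_image.2 ⟨⟨i', h1⟩, Finset.mem_attach _ _, hf1⟩
      have hj := (huzmem j).1 he
      have hd : j ≠ j' := fun h => hj (h ▸ hjB)
      exact ⟨by simp [inapx], by simp [inapx, hd]⟩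
    ·
      have hd : j ≠ j' := fun h => hne (by rw [h])
      exact ⟨by simp [inapx, hd], by simp [inapx, hd]⟩
    ·
      have hj := (huzmem j).1 he
      have hj' := (hzzmem j').1 he2
      have hd : j ≠ j' := fun h => hj (h ▸ hj')
      exact ⟨by simp [inapx, hd], by simp [inapx]⟩
    ·
      exact ⟨by simp [inapx], by simp [inapx]⟩
    ·
      exact ⟨by simp [inapx], by simp [inapx]⟩
    ·
      exact ⟨by simp [inapx], by simp [inapx]⟩
    ·
      have hj := (hzzmem j).1 he
      have hj' := (huzmem j').1 he2
      have hd : j ≠ j' := fun h => hj' (h ▸ hj)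
      exact ⟨by simp [inapx, hd], by simp [inapx]⟩
    ·
      have hd : j ≠ j' := fun h => hne (by rw [h])
      exact ⟨by simp [inapx, hd], by simp [inapx, hd]⟩
  -- partner value facts
  have hval_u : ∀ i : Fin (2*m), ∃ e', (inapx m G).mU M (Sum.inl i) = some e' ∧
      (inapx m G).pU (Sum.inl i) e' = (if i ∈ Ucov then (2:ℝ) else 1) := by
    intro i
    by_cases hi : i ∈ Ucov
    · have hi2 := hi
      rw [hUcovdef] at hi2
      obtain ⟨p, hpK, hp1⟩ := Finset.mem_image.1 hi2
      refine ⟨Sum.inl ⟨p, hKG hpK⟩, ?_, ?_⟩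
      · have hmem : (Sum.inl ⟨p, hKG hpK⟩ : {p : Fin (2 * m) × Fin (2 * m) // p ∈ G} ⊕ Fin (2 * m) ⊕
            (Fin (2 * m) × Fin m) ⊕ Fin m ⊕ Fin m) ∈ M := (hGmem _).2 hpK
        have h3 := (inapx m G).mU_eq_some' hmatch hmem
        rw [show (inapx m G).src (Sum.inl (⟨p, hKG hpK⟩ : {p : Fin (2 * m) × Fin (2 * m) // p ∈ G})) = Sum.inl p.1 from rfl, hp1] at h3
        exact h3
      · rw [if_pos hi]
        show (if p.1 = i then (2:ℝ) else 0) = 2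
        rw [if_pos hp1]
    · have hiA : i ∈ A := by rw [hAdef]; exact Finset.mem_compl.2 hi
      refine ⟨Sum.inr (Sum.inr (Sum.inl (i, f ⟨i, hiA⟩))), ?_, ?_⟩
      · have hmem : (Sum.inr (Sum.inr (Sum.inl (i, f ⟨i, hiA⟩))) : {p : Fin (2 * m) × Fin (2 * m) // p ∈ G} ⊕ Fin (2 * m) ⊕
            (Fin (2 * m) × Fin m) ⊕ Fin m ⊕ Fin m) ∈ M := (huumem i _).2 ⟨hiA, rfl⟩
        have h3 := (inapx m G).mU_eq_some' hmatch hmem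
        rw [show (inapx m G).src (Sum.inr (Sum.inr (Sum.inl (i, f ⟨i, hiA⟩)))) = Sum.inl i from rfl] at h3
        exact h3
      · rw [if_neg hi]
        show (if i = i then (1:ℝ) else 0) = 1
        rw [if_pos rfl]
  have hw'_none : ∀ i ∈ Wcov, (inapx m G).mU M (Sum.inr (Sum.inl i)) = none := by
    intro i hiW
    apply (inapx m G).mU_eq_none'
    intro e heM hsrc
    rcases e with q | i2 | ⟨i2, j2⟩ | j2 | j2
    · simp [inapx] at hsrc
    · have h2 : i2 = i := by simpa [inapx] using hsrc
      subst h2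
      exact ((hwmem i2).1 heM) hiW
    · simp [inapx] at hsrc
    · simp [inapx] at hsrc
    · simp [inapx] at hsrc
  have hw'_some : ∀ i ∉ Wcov,
      (inapx m G).mU M (Sum.inr (Sum.inl i)) = some (Sum.inr (Sum.inl i)) ∧
      (inapx m G).pU (Sum.inr (Sum.inl i)) (Sum.inr (Sum.inl i)) = 1 := by
    intro i hi
    constructor
    · have hmem : (Sum.inr (Sum.inl i) : {p : Fin (2 * m) × Fin (2 * m) // p ∈ G} ⊕ Fin (2 * m) ⊕
          (Fin (2 * m) × Fin m) ⊕ Fin m ⊕ Fin m) ∈ M := (hwmem i).2 hi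
      exact (inapx m G).mU_eq_some' hmatch hmem
    · show (if i = i then (1:ℝ) else 0) = 1
      rw [if_pos rfl]
  have hval_z : ∀ j : Fin m, ∃ e', (inapx m G).mU M (Sum.inr (Sum.inr j)) = some e' ∧
      (inapx m G).pU (Sum.inr (Sum.inr j)) e' = (if j ∈ B then (1:ℝ) else 2) := by
    intro j
    by_cases hj : j ∈ B
    · refine ⟨Sum.inr (Sum.inr (Sum.inr (Sum.inr j))), ?_, ?_⟩
      · have hmem := (hzzmem j).2 hj
        have h3 := (inapx m G).mU_eq_some' hmatch hmem
        rw [show (inapx m G).src (Sum.inr (Sum.inr (Sum.inr (Sum.inr j))) : {p : Fin (2 * m) × Fin (2 * m) // p ∈ G} ⊕ Fin (2 * m) ⊕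
            (Fin (2 * m) × Fin m) ⊕ Fin m ⊕ Fin m) = Sum.inr (Sum.inr j) from rfl] at h3
        exact h3
      · rw [if_pos hj]
        show (if j = j then (1:ℝ) else 0) = 1
        rw [if_pos rfl]
    · refine ⟨Sum.inr (Sum.inr (Sum.inr (Sum.inl j))), ?_, ?_⟩
      · have hmem := (huzmem j).2 hj
        have h3 := (inapx m G).mU_eq_some' hmatch hmem
        rw [show (inapx m G).src (Sum.inr (Sum.inr (Sum.inr (Sum.inl j))) : {p : Fin (2 * m) × Fin (2 * m) // p ∈ G} ⊕ Fin (2 * m) ⊕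
            (Fin (2 * m) × Fin m) ⊕ Fin m ⊕ Fin m) = Sum.inr (Sum.inr j) from rfl] at h3
        exact h3
      · rw [if_neg hj]
        show (if j = j then (2:ℝ) else 0) = 2
        rw [if_pos rfl]
  have hval_w : ∀ i : Fin (2*m), ∃ e', (inapx m G).mW M (Sum.inl i) = some e' ∧
      (inapx m G).pW (Sum.inl i) e' = (if i ∈ Wcov then (2:ℝ) else 1) := by
    intro i
    by_cases hi : i ∈ Wcov
    · have hi2 := hi
      rw [hWcovdef] at hi2
      obtain ⟨p, hpK, hp2⟩ := Finset.mem_image.1 hi2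
      refine ⟨Sum.inl ⟨p, hKG hpK⟩, ?_, ?_⟩
      · have hmem : (Sum.inl ⟨p, hKG hpK⟩ : {p : Fin (2 * m) × Fin (2 * m) // p ∈ G} ⊕ Fin (2 * m) ⊕
            (Fin (2 * m) × Fin m) ⊕ Fin m ⊕ Fin m) ∈ M := (hGmem _).2 hpK
        have h3 := (inapx m G).mW_eq_some' hmatch hmem
        rw [show (inapx m G).dst (Sum.inl (⟨p, hKG hpK⟩ : {p : Fin (2 * m) × Fin (2 * m) // p ∈ G})) = Sum.inl p.2 from rfl, hp2] at h3
        exact h3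
      · rw [if_pos hi]
        show (if p.2 = i then (2:ℝ) else 0) = 2
        rw [if_pos hp2]
    · refine ⟨Sum.inr (Sum.inl i), ?_, ?_⟩
      · have hmem : (Sum.inr (Sum.inl i) : {p : Fin (2 * m) × Fin (2 * m) // p ∈ G} ⊕ Fin (2 * m) ⊕
            (Fin (2 * m) × Fin m) ⊕ Fin m ⊕ Fin m) ∈ M := (hwmem i).2 hi
        have h3 := (inapx m G).mW_eq_some' hmatch hmem
        rw [show (inapx m G).dst (Sum.inr (Sum.inl i) : {p : Fin (2 * m) × Fin (2 * m) // p ∈ G} ⊕ Fin (2 * m) ⊕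
            (Fin (2 * m) × Fin m) ⊕ Fin m ⊕ Fin m) = Sum.inl i from rfl] at h3
        exact h3
      · rw [if_neg hi]
        show (if i = i then (1:ℝ) else 0) = 1
        rw [if_pos rfl]
  have hval_u' : ∀ j : Fin m, ∃ e', (inapx m G).mW M (Sum.inr (Sum.inl j)) = some e' ∧
      (inapx m G).pW (Sum.inr (Sum.inl j)) e' = (if j ∈ B then (1:ℝ) else 2) := by
    intro j
    by_cases hj : j ∈ B
    · have hj2 := hj
      rw [hBdef] at hj2
      obtain ⟨x, -, hfx⟩ := Finset.mem_image.1 hj2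
      refine ⟨Sum.inr (Sum.inr (Sum.inl (x.1, j))), ?_, ?_⟩
      · have hmem : (Sum.inr (Sum.inr (Sum.inl (x.1, j))) : {p : Fin (2 * m) × Fin (2 * m) // p ∈ G} ⊕ Fin (2 * m) ⊕
            (Fin (2 * m) × Fin m) ⊕ Fin m ⊕ Fin m) ∈ M := by
          refine (huumem x.1 j).2 ⟨x.2, ?_⟩
          have hx : (⟨x.1, x.2⟩ : {y // y ∈ A}) = x := rfl
          rw [hx, hfx]
        have h3 := (inapx m G).mW_eq_some' hmatch hmem
        rw [show (inapx m G).dst (Sum.inr (Sum.inr (Sum.inl (x.1, j))) : {p : Fin (2 * m) × Fin (2 * m) // p ∈ G} ⊕ Fin (2 * m) ⊕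
            (Fin (2 * m) × Fin m) ⊕ Fin m ⊕ Fin m) = Sum.inr (Sum.inl j) from rfl] at h3
        exact h3
      · rw [if_pos hj]
        show (if j = j then (1:ℝ) else 0) = 1
        rw [if_pos rfl]
    · refine ⟨Sum.inr (Sum.inr (Sum.inr (Sum.inl j))), ?_, ?_⟩
      · have hmem := (huzmem j).2 hj
        have h3 := (inapx m G).mW_eq_some' hmatch hmem
        rw [show (inapx m G).dst (Sum.inr (Sum.inr (Sum.inr (Sum.inl j))) : {p : Fin (2 * m) × Fin (2 * m) // p ∈ G} ⊕ Fin (2 * m) ⊕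
            (Fin (2 * m) × Fin m) ⊕ Fin m ⊕ Fin m) = Sum.inr (Sum.inl j) from rfl] at h3
        exact h3
      · rw [if_neg hj]
        show (if j = j then (2:ℝ) else 0) = 2
        rw [if_pos rfl]
  have hz'_some : ∀ j ∈ B,
      (inapx m G).mW M (Sum.inr (Sum.inr j)) = some (Sum.inr (Sum.inr (Sum.inr (Sum.inr j)))) ∧
      (inapx m G).pW (Sum.inr (Sum.inr j)) (Sum.inr (Sum.inr (Sum.inr (Sum.inr j)))) = 1 := by
    intro j hj
    constructor
    · have hmem := (hzzmem j).2 hj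
      exact (inapx m G).mW_eq_some' hmatch hmem
    · show (if j = j then (1:ℝ) else 0) = 1
      rw [if_pos rfl]
  have hz'_none : ∀ j ∉ B, (inapx m G).mW M (Sum.inr (Sum.inr j)) = none := by
    intro j hj
    apply (inapx m G).mW_eq_none'
    intro e heM hdst
    rcases e with q | i2 | ⟨i2, j2⟩ | j2 | j2
    · simp [inapx] at hdst
    · simp [inapx] at hdst
    · simp [inapx] at hdst
    · simp [inapx] at hdst
    · have h2 : j2 = j := by simpa [inapx] using hdst
      subst h2
      exact hj ((hzzmem j2).1 heM)
  -- the witness vectors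
  set aU : (Fin (2*m) ⊕ Fin (2*m) ⊕ Fin m) → ℤ :=
    Sum.elim (fun _ => 1)
      (Sum.elim (fun i => if i ∈ Wcov then 0 else 1) (fun j => if j ∈ B then -1 else 0)) with haU
  set aW : (Fin (2*m) ⊕ Fin m ⊕ Fin m) → ℤ :=
    Sum.elim (fun _ => -1)
      (Sum.elim (fun j => if j ∈ B then -1 else 0) (fun j => if j ∈ B then 1 else 0)) with haW
  refine ⟨M, hmatch, (inapx m G).witness_weaklyPopular hmatch aU aW ?_ ?_ ?_ ?_, ?_⟩
  · -- hUub
    intro u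
    rcases u with i | i | j
    · obtain ⟨e', he', hp⟩ := hval_u i
      rw [he', if_neg (by simp)]
      rw [show (inapx m G).valU (Sum.inl i) (some e') = (inapx m G).pU (Sum.inl i) e' from rfl,
        hp, if_neg (by split_ifs <;> norm_num)]
      simp [haU]
    · by_cases hiW : i ∈ Wcov
      · rw [hw'_none i hiW, if_pos rfl]
        simp [haU, hiW]
      · obtain ⟨he', hp⟩ := hw'_some i hiW
        rw [he', if_neg (by simp)]
        rw [show (inapx m G).valU (Sum.inr (Sum.inl i)) (some (Sum.inr (Sum.inl i))) =
          (inapx m G).pU (Sum.inr (Sum.inl i)) (Sum.inr (Sum.inl i)) from rfl, hp,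
          if_neg (by norm_num)]
        simp [haU]
        split_ifs <;> norm_num
    · obtain ⟨e', he', hp⟩ := hval_z j
      rw [he', if_neg (by simp)]
      rw [show (inapx m G).valU (Sum.inr (Sum.inr j)) (some e') = (inapx m G).pU (Sum.inr (Sum.inr j)) e' from rfl,
        hp, if_neg (by split_ifs <;> norm_num)]
      simp [haU]
      split_ifs <;> norm_num
  · -- hWub
    intro w
    rcases w with i | j | j
    · obtain ⟨e', he', hp⟩ := hval_w i
      rw [he', if_neg (by simp)]
      rw [show (inapx m G).valW (Sum.inl i) (some e') = (inapx m G).pW (Sum.inl i) e' from rfl,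
        hp, if_neg (by split_ifs <;> norm_num)]
      simp [haW]
    · obtain ⟨e', he', hp⟩ := hval_u' j
      rw [he', if_neg (by simp)]
      rw [show (inapx m G).valW (Sum.inr (Sum.inl j)) (some e') = (inapx m G).pW (Sum.inr (Sum.inl j)) e' from rfl,
        hp, if_neg (by split_ifs <;> norm_num)]
      simp [haW]
      split_ifs <;> norm_num
    · by_cases hjB : j ∈ B
      · obtain ⟨he', hp⟩ := hz'_some j hjB
        rw [he', if_neg (by simp)]
        rw [show (inapx m G).valW (Sum.inr (Sum.inr j)) (some (Sum.inr (Sum.inr (Sum.inr (Sum.inr j))))) =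
          (inapx m G).pW (Sum.inr (Sum.inr j)) (Sum.inr (Sum.inr (Sum.inr (Sum.inr j)))) from rfl, hp,
          if_neg (by norm_num)]
        simp [haW]
        split_ifs <;> norm_num
      · rw [hz'_none j hjB, if_pos rfl]
        simp [haW, hjB]
  · -- hedge
    intro e
    rcases e with q | i | ⟨i, j⟩ | j | j
    · -- G-edge
      have hsrc : (inapx m G).src (Sum.inl q) = Sum.inl q.1.1 := rfl
      have hdst : (inapx m G).dst (Sum.inl q) = Sum.inl q.1.2 := rfl
      rw [hsrc, hdst]
      by_cases hqK : q.1 ∈ K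
      · have hmem := (hGmem q).2 hqK
        have hU := (inapx m G).mU_eq_some' hmatch hmem
        have hW := (inapx m G).mW_eq_some' hmatch hmem
        rw [hsrc] at hU
        rw [hdst] at hW
        rw [if_pos hU, if_pos hW]
        simp [haU, haW]
      · have hnmem : (Sum.inl q : {p : Fin (2 * m) × Fin (2 * m) // p ∈ G} ⊕ Fin (2 * m) ⊕
            (Fin (2 * m) × Fin m) ⊕ Fin m ⊕ Fin m) ∉ M := fun h => hqK ((hGmem q).1 h)
        have hnU : ¬((inapx m G).mU M (Sum.inl q.1.1) = some (Sum.inl q)) :=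
          fun h => hnmem ((inapx m G).mU_mem' h).1
        have hnW : ¬((inapx m G).mW M (Sum.inl q.1.2) = some (Sum.inl q)) :=
          fun h => hnmem ((inapx m G).mW_mem' h).1
        rw [if_neg hnU, if_neg hnW]
        obtain ⟨p, hpK, hp⟩ := hKmax q.1 q.2
        have haUv : aU (Sum.inl q.1.1) = 1 := by simp [haU]
        have haWv : aW (Sum.inl q.1.2) = -1 := by simp [haW]
        rcases hp with hp | hp
        · have hcov : q.1.1 ∈ Ucov := by
            rw [hUcovdef]; exact Finset.mem_image.2 ⟨p, hpK, hp⟩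
          obtain ⟨e', he', hpe⟩ := hval_u q.1.1
          rw [if_pos hcov] at hpe
          have hv : (inapx m G).valU (Sum.inl q.1.1) ((inapx m G).mU M (Sum.inl q.1.1)) = 2 := by
            rw [(inapx m G).valU_of he', hpe]
          have hpUe : (inapx m G).pU (Sum.inl q.1.1) (Sum.inl q) = 2 := by
            show (if q.1.1 = q.1.1 then (2:ℝ) else 0) = 2
            rw [if_pos rfl]
          rw [hv, hpUe, if_neg (show ¬((2:ℝ) < 2) by norm_num), haUv, haWv]
          split_ifs <;> norm_num
        · have hcov : q.1.2 ∈ Wcov := by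
            rw [hWcovdef]; exact Finset.mem_image.2 ⟨p, hpK, hp⟩
          obtain ⟨e', he', hpe⟩ := hval_w q.1.2
          rw [if_pos hcov] at hpe
          have hv : (inapx m G).valW (Sum.inl q.1.2) ((inapx m G).mW M (Sum.inl q.1.2)) = 2 := by
            rw [(inapx m G).valW_of he', hpe]
          have hpWe : (inapx m G).pW (Sum.inl q.1.2) (Sum.inl q) = 2 := by
            show (if q.1.2 = q.1.2 then (2:ℝ) else 0) = 2
            rw [if_pos rfl]
          rw [hv, hpWe, if_neg (show ¬((2:ℝ) < 2) by norm_num), haUv, haWv]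
          split_ifs <;> norm_num
    · -- w-w' edge
      have hsrc : (inapx m G).src (Sum.inr (Sum.inl i)) = Sum.inr (Sum.inl i) := rfl
      have hdst : (inapx m G).dst (Sum.inr (Sum.inl i)) = Sum.inl i := rfl
      rw [hsrc, hdst]
      by_cases hiW : i ∈ Wcov
      · have hnmem : (Sum.inr (Sum.inl i) : {p : Fin (2 * m) × Fin (2 * m) // p ∈ G} ⊕ Fin (2 * m) ⊕
            (Fin (2 * m) × Fin m) ⊕ Fin m ⊕ Fin m) ∉ M := fun h => ((hwmem i).1 h) hiW
        have hnU : ¬((inapx m G).mU M (Sum.inr (Sum.inl i)) = some (Sum.inr (Sum.inl i))) :=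
          fun h => hnmem ((inapx m G).mU_mem' h).1
        have hnW : ¬((inapx m G).mW M (Sum.inl i) = some (Sum.inr (Sum.inl i))) :=
          fun h => hnmem ((inapx m G).mW_mem' h).1
        rw [if_neg hnU, if_neg hnW, hw'_none i hiW]
        obtain ⟨e', he', hpe⟩ := hval_w i
        rw [if_pos hiW] at hpe
        have hv : (inapx m G).valW (Sum.inl i) ((inapx m G).mW M (Sum.inl i)) = 2 := by
          rw [(inapx m G).valW_of he', hpe]
        have hvU : (inapx m G).valU (Sum.inr (Sum.inl i)) (none :
            Option ({p : Fin (2 * m) × Fin (2 * m) // p ∈ G} ⊕ Fin (2 * m) ⊕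
            (Fin (2 * m) × Fin m) ⊕ Fin m ⊕ Fin m)) = 0 := rfl
        have hpU1 : (inapx m G).pU (Sum.inr (Sum.inl i)) (Sum.inr (Sum.inl i)) = 1 := by
          show (if i = i then (1:ℝ) else 0) = 1
          rw [if_pos rfl]
        have hpW1 : (inapx m G).pW (Sum.inl i) (Sum.inr (Sum.inl i)) = 1 := by
          show (if i = i then (1:ℝ) else 0) = 1
          rw [if_pos rfl]
        rw [hvU, hv, hpU1, hpW1, if_pos (show (0:ℝ) < 1 by norm_num),
          if_neg (show ¬((2:ℝ) < 1) by norm_num)]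
        simp [haU, haW, hiW]
      · have hmem := (hwmem i).2 hiW
        have hU := (inapx m G).mU_eq_some' hmatch hmem
        have hW := (inapx m G).mW_eq_some' hmatch hmem
        rw [hsrc] at hU
        rw [hdst] at hW
        rw [if_pos hU, if_pos hW]
        simp [haU, haW, hiW]
    · -- u-u' edge
      have hsrc : (inapx m G).src (Sum.inr (Sum.inr (Sum.inl (i, j)))) = Sum.inl i := rfl
      have hdst : (inapx m G).dst (Sum.inr (Sum.inr (Sum.inl (i, j)))) = Sum.inr (Sum.inl j) := rfl
      rw [hsrc, hdst]
      by_cases hmem : (Sum.inr (Sum.inr (Sum.inl (i, j))) : {p : Fin (2 * m) × Fin (2 * m) // p ∈ G} ⊕ Fin (2 * m) ⊕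
          (Fin (2 * m) × Fin m) ⊕ Fin m ⊕ Fin m) ∈ M
      · obtain ⟨hiA, hfij⟩ := (huumem i j).1 hmem
        have hjB : j ∈ B := by
          rw [hBdef]; exact Finset.mem_image.2 ⟨⟨i, hiA⟩, Finset.mem_attach _ _, hfij⟩
        have hU := (inapx m G).mU_eq_some' hmatch hmem
        have hW := (inapx m G).mW_eq_some' hmatch hmem
        rw [hsrc] at hU
        rw [hdst] at hW
        rw [if_pos hU, if_pos hW]
        simp [haU, haW, hjB]
      · have hnU : ¬((inapx m G).mU M (Sum.inl i) = some (Sum.inr (Sum.inr (Sum.inl (i, j))))) :=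
          fun h => hmem ((inapx m G).mU_mem' h).1
        have hnW : ¬((inapx m G).mW M (Sum.inr (Sum.inl j)) = some (Sum.inr (Sum.inr (Sum.inl (i, j))))) :=
          fun h => hmem ((inapx m G).mW_mem' h).1
        rw [if_neg hnU, if_neg hnW]
        obtain ⟨e', he', hpe⟩ := hval_u i
        obtain ⟨e2, he2, hpe2⟩ := hval_u' j
        have hv : (inapx m G).valU (Sum.inl i) ((inapx m G).mU M (Sum.inl i)) =
            (if i ∈ Ucov then (2:ℝ) else 1) := by
          rw [(inapx m G).valU_of he', hpe]
        have hv2 : (inapx m G).valW (Sum.inr (Sum.inl j)) ((inapx m G).mW M (Sum.inr (Sum.inl j))) =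
            (if j ∈ B then (1:ℝ) else 2) := by
          rw [(inapx m G).valW_of he2, hpe2]
        have hpU1 : (inapx m G).pU (Sum.inl i) (Sum.inr (Sum.inr (Sum.inl (i, j)))) = 1 := by
          show (if i = i then (1:ℝ) else 0) = 1
          rw [if_pos rfl]
        have hpW1 : (inapx m G).pW (Sum.inr (Sum.inl j)) (Sum.inr (Sum.inr (Sum.inl (i, j)))) = 1 := by
          show (if j = j then (1:ℝ) else 0) = 1
          rw [if_pos rfl]
        rw [hv, hv2, hpU1, hpW1, if_neg (by split_ifs <;> norm_num),
          if_neg (by split_ifs <;> norm_num)]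
        simp [haU, haW]
        split_ifs <;> norm_num
    · -- u'-z edge
      have hsrc : (inapx m G).src (Sum.inr (Sum.inr (Sum.inr (Sum.inl j)))) = Sum.inr (Sum.inr j) := rfl
      have hdst : (inapx m G).dst (Sum.inr (Sum.inr (Sum.inr (Sum.inl j)))) = Sum.inr (Sum.inl j) := rfl
      rw [hsrc, hdst]
      by_cases hjB : j ∈ B
      · have hnmem : (Sum.inr (Sum.inr (Sum.inr (Sum.inl j))) : {p : Fin (2 * m) × Fin (2 * m) // p ∈ G} ⊕ Fin (2 * m) ⊕
            (Fin (2 * m) × Fin m) ⊕ Fin m ⊕ Fin m) ∉ M := fun h => ((huzmem j).1 h) hjB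
        have hnU : ¬((inapx m G).mU M (Sum.inr (Sum.inr j)) = some (Sum.inr (Sum.inr (Sum.inr (Sum.inl j))))) :=
          fun h => hnmem ((inapx m G).mU_mem' h).1
        have hnW : ¬((inapx m G).mW M (Sum.inr (Sum.inl j)) = some (Sum.inr (Sum.inr (Sum.inr (Sum.inl j))))) :=
          fun h => hnmem ((inapx m G).mW_mem' h).1
        rw [if_neg hnU, if_neg hnW]
        obtain ⟨e', he', hpe⟩ := hval_z j
        obtain ⟨e2, he2, hpe2⟩ := hval_u' j
        rw [if_pos hjB] at hpe
        rw [if_pos hjB] at hpe2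
        have hv : (inapx m G).valU (Sum.inr (Sum.inr j)) ((inapx m G).mU M (Sum.inr (Sum.inr j))) = 1 := by
          rw [(inapx m G).valU_of he', hpe]
        have hv2 : (inapx m G).valW (Sum.inr (Sum.inl j)) ((inapx m G).mW M (Sum.inr (Sum.inl j))) = 1 := by
          rw [(inapx m G).valW_of he2, hpe2]
        have hpU2 : (inapx m G).pU (Sum.inr (Sum.inr j)) (Sum.inr (Sum.inr (Sum.inr (Sum.inl j)))) = 2 := by
          show (if j = j then (2:ℝ) else 0) = 2
          rw [if_pos rfl]
        have hpW2 : (inapx m G).pW (Sum.inr (Sum.inl j)) (Sum.inr (Sum.inr (Sum.inr (Sum.inl j)))) = 2 := by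
          show (if j = j then (2:ℝ) else 0) = 2
          rw [if_pos rfl]
        rw [hv, hv2, hpU2, hpW2, if_pos (show (1:ℝ) < 2 by norm_num)]
        simp [haU, haW, hjB]
      · have hmem := (huzmem j).2 hjB
        have hU := (inapx m G).mU_eq_some' hmatch hmem
        have hW := (inapx m G).mW_eq_some' hmatch hmem
        rw [hsrc] at hU
        rw [hdst] at hW
        rw [if_pos hU, if_pos hW]
        simp [haU, haW, hjB]
    · -- z-z' edge
      have hsrc : (inapx m G).src (Sum.inr (Sum.inr (Sum.inr (Sum.inr j)))) = Sum.inr (Sum.inr j) := rfl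
      have hdst : (inapx m G).dst (Sum.inr (Sum.inr (Sum.inr (Sum.inr j)))) = Sum.inr (Sum.inr j) := rfl
      rw [hsrc, hdst]
      by_cases hjB : j ∈ B
      · have hmem := (hzzmem j).2 hjB
        have hU := (inapx m G).mU_eq_some' hmatch hmem
        have hW := (inapx m G).mW_eq_some' hmatch hmem
        rw [hsrc] at hU
        rw [hdst] at hW
        rw [if_pos hU, if_pos hW]
        simp [haU, haW, hjB]
      · have hnmem : (Sum.inr (Sum.inr (Sum.inr (Sum.inr j))) : {p : Fin (2 * m) × Fin (2 * m) // p ∈ G} ⊕ Fin (2 * m) ⊕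
            (Fin (2 * m) × Fin m) ⊕ Fin m ⊕ Fin m) ∉ M := fun h => hjB ((hzzmem j).1 h)
        have hnU : ¬((inapx m G).mU M (Sum.inr (Sum.inr j)) = some (Sum.inr (Sum.inr (Sum.inr (Sum.inr j))))) :=
          fun h => hnmem ((inapx m G).mU_mem' h).1
        have hnW : ¬((inapx m G).mW M (Sum.inr (Sum.inr j)) = some (Sum.inr (Sum.inr (Sum.inr (Sum.inr j))))) :=
          fun h => hnmem ((inapx m G).mW_mem' h).1
        rw [if_neg hnU, if_neg hnW, hz'_none j hjB]
        obtain ⟨e', he', hpe⟩ := hval_z j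
        rw [if_neg hjB] at hpe
        have hv : (inapx m G).valU (Sum.inr (Sum.inr j)) ((inapx m G).mU M (Sum.inr (Sum.inr j))) = 2 := by
          rw [(inapx m G).valU_of he', hpe]
        have hvW : (inapx m G).valW (Sum.inr (Sum.inr j)) (none :
            Option ({p : Fin (2 * m) × Fin (2 * m) // p ∈ G} ⊕ Fin (2 * m) ⊕
            (Fin (2 * m) × Fin m) ⊕ Fin m ⊕ Fin m)) = 0 := rfl
        have hpU1 : (inapx m G).pU (Sum.inr (Sum.inr j)) (Sum.inr (Sum.inr (Sum.inr (Sum.inr j)))) = 1 := by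
          show (if j = j then (1:ℝ) else 0) = 1
          rw [if_pos rfl]
        have hpW1 : (inapx m G).pW (Sum.inr (Sum.inr j)) (Sum.inr (Sum.inr (Sum.inr (Sum.inr j)))) = 1 := by
          show (if j = j then (1:ℝ) else 0) = 1
          rw [if_pos rfl]
        rw [hv, hvW, hpU1, hpW1, if_neg (show ¬((2:ℝ) < 1) by norm_num),
          if_pos (show (0:ℝ) < 1 by norm_num)]
        simp [haU, haW, hjB]
  · -- hsum
    have hWc : Wcovᶜ.card = 2*m - k := by
      rw [Finset.card_compl, hWcovcard]; simp
    rw [haU, haW]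
    rw [Fintype.sum_sum_type, Fintype.sum_sum_type, Fintype.sum_sum_type, Fintype.sum_sum_type]
    simp only [Sum.elim_inl, Sum.elim_inr]
    have hs1 : (∑ i : Fin (2*m), if i ∈ Wcov then (0:ℤ) else 1) = (Wcovᶜ.card : ℤ) := by
      rw [Finset.sum_ite, Finset.sum_const, Finset.sum_const, smul_zero, zero_add,
        nsmul_eq_mul, mul_one]
      congr 2
      ext x; simp
    have hs2 : (∑ j : Fin m, if j ∈ B then (-1:ℤ) else 0) = -(B.card : ℤ) := by
      rw [Finset.sum_ite, Finset.sum_const, Finset.sum_const, smul_zero, add_zero,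
        nsmul_eq_mul, mul_neg_one, Finset.filter_mem_eq_inter, Finset.univ_inter]
    have hs3 : (∑ j : Fin m, if j ∈ B then (1:ℤ) else 0) = (B.card : ℤ) := by
      rw [Finset.sum_ite, Finset.sum_const, Finset.sum_const, smul_zero, add_zero,
        nsmul_eq_mul, mul_one, Finset.filter_mem_eq_inter, Finset.univ_inter]
    rw [hs1, hs2, hs3]
    simp only [Finset.sum_const, Finset.card_univ, Fintype.card_fin, nsmul_eq_mul, mul_one,
      mul_neg_one]
    rw [hWc, hBcard]
    push_cast
    omega
  · -- cardinality
    have hcard := card_Mset hKG A Wcov f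
    rw [← hMdef, ← hBdef] at hcard
    have hWc : Wcovᶜ.card = 2*m - k := by
      rw [Finset.card_compl, hWcovcard]; simp
    have hBc : Bᶜ.card = m - (2*m - k) := by
      rw [Finset.card_compl, hBcard]; simp
    rw [hcard, hKcard, hWc, hAcard, hBc, hBcard]
    omega

open PrefInst in
/-- If `G` (bipartite, `|U|=|W|=n=2m` even) has a maximal matching
of size `k ≥ n/2 = m`, then the reduction instance `I'` has a weakly popular
matching of size at least `(5/2)n − k = 5m − k`. -/
theorem inapx_maximal_gives_weakly_popular
    (m k : ℕ) (G : Finset (Fin (2 * m) × Fin (2 * m)))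
    (K : Finset (Fin (2 * m) × Fin (2 * m)))
    (hK : IsMaximalMatchingOf G K) (hKcard : K.card = k) (hk : m ≤ k) :
    ∃ M', (inapx m G).IsMatching M' ∧ (inapx m G).WeaklyPopular M' ∧
      5 * m - k ≤ M'.card :=
  inapx_aux m k G K hK hKcard hk
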